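/- arXiv:math/0309420 — 4 statements merged into one kernel-verified Lean document; each statement's English description precedes it below -/
import Mathlib

section
/- Fix i ∈ {1,…,n} and λ ∈ H_{ii}, and define the linear functional T : E → ℂ by T(ξ) = ⟨λ, ξ_{ii}⟩. Then T(d·ξ·d') = d_i T(ξ) d'_i for all d, d' ∈ ℂⁿ and ξ ∈ E, and sup{ |T(ξ)| : ξ ∈ E, ‖ξ‖_E ≤ 1 } = ‖λ‖. (This is the converse direction in the classification of characters of 𝒯₊(C): every λ in the closed unit ball of H_{ii} yields a contractive covariant functional φ_{(i,λ)}.) -/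
/-- The norm on the quiver correspondence `E = ∏_{k,l} H_{kl}`:
`‖ξ‖_E = max_j (∑_k ‖ξ_{kj}‖²)^{1/2}`. -/
noncomputable def normE {n : ℕ} [Nonempty (Fin n)] {H : Fin n → Fin n → Type*}
    [∀ k l, NormedAddCommGroup (H k l)] (ξ : ∀ k l, H k l) : ℝ :=
  Finset.univ.sup' Finset.univ_nonempty fun j : Fin n =>
    Real.sqrt (∑ k : Fin n, ‖ξ k j‖ ^ 2)

/-- The `ℂⁿ`-bimodule action on `E`: `(d·ξ·d')_{kl} = d_k ξ_{kl} d'_l`. -/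
def bimod {n : ℕ} {H : Fin n → Fin n → Type*} [∀ k l, AddCommGroup (H k l)]
    [∀ k l, Module ℂ (H k l)] (d : Fin n → ℂ) (ξ : ∀ k l, H k l) (d' : Fin n → ℂ) :
    ∀ k l, H k l :=
  fun k l => (d k * d' l) • ξ k l

/-- for `i` and `λ ∈ H_{ii}`, the functional `T ξ = ⟨λ, ξ_{ii}⟩` is covariant:
`T(d·ξ·d') = d_i T(ξ) d'_i`, and its norm, `sup {|T ξ| : ‖ξ‖_E ≤ 1}`, equals `‖λ‖`. -/
theorem stmt_1 {n : ℕ} [Nonempty (Fin n)] {H : Fin n → Fin n → Type*}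
    [∀ k l, NormedAddCommGroup (H k l)] [∀ k l, InnerProductSpace ℂ (H k l)]
    (i : Fin n) (lam : H i i)
    (T : (∀ k l, H k l) → ℂ)
    (hT : ∀ ξ : ∀ k l, H k l, T ξ = (inner ℂ lam (ξ i i) : ℂ)) :
    (∀ (d d' : Fin n → ℂ) (ξ : ∀ k l, H k l),
        T (bimod d ξ d') = d i * T ξ * d' i) ∧
      IsLUB {r : ℝ | ∃ ξ : ∀ k l, H k l, normE ξ ≤ 1 ∧ r = ‖T ξ‖} ‖lam‖ := by
    classical
  have hc : ∀ (d d' : Fin n → ℂ) (ξ : ∀ k l, H k l),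
      T (bimod d ξ d') = d i * T ξ * d' i := by
    intro d d' ξ
    rw [hT, hT]
    simp only [bimod, inner_smul_right]
    ring
  refine ⟨hc, ?_⟩
  set η : H i i := ((‖lam‖ : ℂ))⁻¹ • lam with hη
  have hηle : ‖η‖ ≤ 1 := by
    rcases eq_or_ne lam 0 with h | h
    · simp [hη, h]
    · rw [hη, norm_smul, norm_inv, Complex.norm_real, Real.norm_of_nonneg (norm_nonneg lam),
        inv_mul_cancel₀ (norm_ne_zero_iff.mpr h)]
  let ξ0 : ∀ k l, H k l := fun k l =>
    if h : k = i ∧ l = i then cast (by rw [h.1, h.2]) η else 0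
  have hξii : ξ0 i i = η := by simp [ξ0]
  have hval : ∀ k l, ¬(k = i ∧ l = i) → ξ0 k l = 0 := by
    intro k l h; simp [ξ0, h]
  have hTξ0 : T ξ0 = (‖lam‖ : ℂ) := by
    rw [hT, hξii, hη, inner_smul_right, inner_self_eq_norm_sq_to_K]
    rcases eq_or_ne lam 0 with h | h
    · simp [h]
    · have : (‖lam‖ : ℂ) ≠ 0 := by
        exact_mod_cast Complex.ofReal_ne_zero.mpr (norm_ne_zero_iff.mpr h)
      field_simp
      rfl
  have hnormξ0 : normE ξ0 ≤ 1 := by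
    apply Finset.sup'_le
    intro j _
    rw [show (1 : ℝ) = Real.sqrt 1 by simp]
    apply Real.sqrt_le_sqrt
    calc ∑ k : Fin n, ‖ξ0 k j‖ ^ 2
        ≤ ∑ k : Fin n, (if k = i then (if j = i then ‖η‖ ^ 2 else 0) else 0) := by
          apply Finset.sum_le_sum
          intro k _
          by_cases hk : k = i
          · by_cases hj : j = i
            · rw [hk, hj, hξii]; simp [hk, hj]
            · rw [hval k j (by tauto)]; simp [hj]
          · rw [hval k j (by tauto)]; simp [hk]
      _ = (if j = i then ‖η‖ ^ 2 else 0) := by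
          rw [Finset.sum_ite_eq' Finset.univ i]; simp
      _ ≤ 1 := by
          by_cases hj : j = i
          · simp only [hj, if_true]
            calc ‖η‖ ^ 2 ≤ 1 ^ 2 := by
                  apply pow_le_pow_left₀ (norm_nonneg _) hηle
              _ = 1 := one_pow 2
          · simp [hj]
  constructor
  · rintro r ⟨ξ, hξ, rfl⟩
    rw [hT]
    calc ‖(inner ℂ lam (ξ i i) : ℂ)‖ ≤ ‖lam‖ * ‖ξ i i‖ := norm_inner_le_norm _ _
      _ ≤ ‖lam‖ * 1 := by
          apply mul_le_mul_of_nonneg_left _ (norm_nonneg _)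
          have h1 : ‖ξ i i‖ ≤ Real.sqrt (∑ k : Fin n, ‖ξ k i‖ ^ 2) := by
            rw [show ‖ξ i i‖ = Real.sqrt (‖ξ i i‖ ^ 2) by
              rw [Real.sqrt_sq (norm_nonneg _)]]
            apply Real.sqrt_le_sqrt
            exact Finset.single_le_sum (f := fun k => ‖ξ k i‖ ^ 2)
              (fun k _ => by positivity) (Finset.mem_univ i)
          have h2 : Real.sqrt (∑ k : Fin n, ‖ξ k i‖ ^ 2) ≤ normE ξ := by
            unfold normE
            exact Finset.le_sup' (fun j : Fin n => Real.sqrt (∑ k : Fin n, ‖ξ k j‖ ^ 2))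
              (Finset.mem_univ i)
          linarith
      _ = ‖lam‖ := mul_one _
  · intro b hb
    have := hb ⟨ξ0, hnormξ0, rfl⟩
    rwa [hTξ0, Complex.norm_real, Real.norm_of_nonneg (norm_nonneg lam)] at this
end

section
/- Fix distinct indices i ≠ j in {1,…,n} and vectors λ_i ∈ H_{ii}, λ_j ∈ H_{jj}, γ ∈ H_{ij} satisfying ‖λ_i‖² + ‖γ‖² ≤ 1 and ‖λ_j‖ ≤ 1. Define T_γ : E → M₂(ℂ) by T_γ(ξ) = [[⟨λ_i, ξ_{ii}⟩, ⟨γ, ξ_{ij}⟩], [0, ⟨λ_j, ξ_{jj}⟩]]. Then ‖T_γ(ξ)‖_op ≤ ‖ξ‖_E for all ξ ∈ E (operator norm on M₂(ℂ) acting on ℂ² with the euclidean norm). (This is the contractivity of the covariant maps T_γ that define the representations ρ_γ = T_γ × σ belonging to G(C, λ̃, i, j).) -/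
/-- The operator norm of a `2 × 2` complex matrix acting on `ℂ²` with the
euclidean norm. -/
noncomputable def opNorm2 (M : Matrix (Fin 2) (Fin 2) ℂ) : ℝ :=
  ‖LinearMap.toContinuousLinearMap (Matrix.toEuclideanLin M)‖


private lemma stmt5_aux {A G Lj u v w x0 x1 N a b c : ℝ}
    (hA : 0 ≤ A) (hG : 0 ≤ G) (hu : 0 ≤ u) (hv : 0 ≤ v) (hw : 0 ≤ w)
    (hx0 : 0 ≤ x0) (hx1 : 0 ≤ x1) (ha : 0 ≤ a) (hb : 0 ≤ b) (hc : 0 ≤ c)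
    (h1 : A ^ 2 + G ^ 2 ≤ 1) (hLj : Lj ≤ 1) (hLj0 : 0 ≤ Lj)
    (hi : u ^ 2 ≤ N ^ 2) (hj : v ^ 2 + w ^ 2 ≤ N ^ 2)
    (ea : a ≤ A * u * x0 + G * v * x1) (ec : c ≤ Lj * w * x1) :
    a ^ 2 + c ^ 2 ≤ N ^ 2 * x0 ^ 2 + N ^ 2 * x1 ^ 2 := by
  have ha2 : a ^ 2 ≤ (A * u * x0 + G * v * x1) ^ 2 := pow_le_pow_left₀ ha ea 2
  have hc2 : c ^ 2 ≤ (Lj * w * x1) ^ 2 := pow_le_pow_left₀ hc ec 2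
  have cauchy : (A * u * x0 + G * v * x1) ^ 2
      ≤ (A ^ 2 + G ^ 2) * (u ^ 2 * x0 ^ 2 + v ^ 2 * x1 ^ 2) := by
    nlinarith [sq_nonneg (A * v * x1 - G * u * x0)]
  have hS : (A ^ 2 + G ^ 2) * (u ^ 2 * x0 ^ 2 + v ^ 2 * x1 ^ 2)
      ≤ u ^ 2 * x0 ^ 2 + v ^ 2 * x1 ^ 2 :=
    mul_le_of_le_one_left (by positivity) h1
  have s3 : u ^ 2 * x0 ^ 2 ≤ N ^ 2 * x0 ^ 2 :=
    mul_le_mul_of_nonneg_right hi (sq_nonneg x0)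
  have s4 : v ^ 2 * x1 ^ 2 + w ^ 2 * x1 ^ 2 ≤ N ^ 2 * x1 ^ 2 := by
    calc v ^ 2 * x1 ^ 2 + w ^ 2 * x1 ^ 2 = (v ^ 2 + w ^ 2) * x1 ^ 2 := by ring
      _ ≤ N ^ 2 * x1 ^ 2 := mul_le_mul_of_nonneg_right hj (sq_nonneg x1)
  have hLw : (Lj * w * x1) ^ 2 ≤ w ^ 2 * x1 ^ 2 := by
    have : Lj ^ 2 ≤ 1 := by nlinarith
    nlinarith [sq_nonneg (w * x1)]
  linarith

/-- if `‖λ_i‖² + ‖γ‖² ≤ 1` and `‖λ_j‖ ≤ 1` then the map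
`T_γ(ξ) = [[⟨λ_i, ξ_{ii}⟩, ⟨γ, ξ_{ij}⟩], [0, ⟨λ_j, ξ_{jj}⟩]]` is contractive:
`‖T_γ(ξ)‖_op ≤ ‖ξ‖_E` for all `ξ ∈ E`. -/
theorem stmt_5 {n : ℕ} [Nonempty (Fin n)] {H : Fin n → Fin n → Type*}
    [∀ k l, NormedAddCommGroup (H k l)] [∀ k l, InnerProductSpace ℂ (H k l)]
    (i j : Fin n) (hij : i ≠ j) (lami : H i i) (lamj : H j j) (γ : H i j)
    (h1 : ‖lami‖ ^ 2 + ‖γ‖ ^ 2 ≤ 1) (h2 : ‖lamj‖ ≤ 1) :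
    ∀ ξ : ∀ k l, H k l,
      opNorm2 !![(inner ℂ lami (ξ i i) : ℂ), (inner ℂ γ (ξ i j) : ℂ);
                 0, (inner ℂ lamj (ξ j j) : ℂ)] ≤ normE ξ := by
  intro ξ
  set N := normE ξ with hN
  have hcol : ∀ l : Fin n, Real.sqrt (∑ k : Fin n, ‖ξ k l‖ ^ 2) ≤ N := by
    intro l
    rw [hN, normE]
    exact Finset.le_sup' (fun j : Fin n => Real.sqrt (∑ k : Fin n, ‖ξ k j‖ ^ 2)) (Finset.mem_univ l)
  have hN0 : 0 ≤ N := le_trans (Real.sqrt_nonneg _) (hcol i)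
  have hsum : ∀ l : Fin n, ∑ k : Fin n, ‖ξ k l‖ ^ 2 ≤ N ^ 2 := by
    intro l
    have := hcol l
    have h0 : (0:ℝ) ≤ ∑ k : Fin n, ‖ξ k l‖ ^ 2 :=
      Finset.sum_nonneg fun _ _ => sq_nonneg _
    nlinarith [Real.sq_sqrt h0, Real.sqrt_nonneg (∑ k : Fin n, ‖ξ k l‖ ^ 2)]
  have hi : ‖ξ i i‖ ^ 2 ≤ N ^ 2 := by
    refine le_trans ?_ (hsum i)
    exact Finset.single_le_sum (f := fun k => ‖ξ k i‖ ^ 2)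
      (fun _ _ => sq_nonneg _) (Finset.mem_univ i)
  have hj : ‖ξ i j‖ ^ 2 + ‖ξ j j‖ ^ 2 ≤ N ^ 2 := by
    refine le_trans ?_ (hsum j)
    have : ∑ k ∈ ({i, j} : Finset (Fin n)), ‖ξ k j‖ ^ 2 ≤ ∑ k : Fin n, ‖ξ k j‖ ^ 2 :=
      Finset.sum_le_sum_of_subset_of_nonneg (Finset.subset_univ _)
        (fun _ _ _ => sq_nonneg _)
    rwa [Finset.sum_pair hij] at this
  rw [opNorm2]
  refine ContinuousLinearMap.opNorm_le_bound _ hN0 ?_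
  intro x
  have hx : ‖(LinearMap.toContinuousLinearMap (Matrix.toEuclideanLin
      !![(inner ℂ lami (ξ i i) : ℂ), (inner ℂ γ (ξ i j) : ℂ);
         0, (inner ℂ lamj (ξ j j) : ℂ)])) x‖
      = Real.sqrt (‖(inner ℂ lami (ξ i i) : ℂ) * x 0 + (inner ℂ γ (ξ i j) : ℂ) * x 1‖ ^ 2
        + ‖(inner ℂ lamj (ξ j j) : ℂ) * x 1‖ ^ 2) := by
    rw [EuclideanSpace.norm_eq]
    congr 1
    rw [Fin.sum_univ_two]
    congr 1 <;>
    · simp [Matrix.toEuclideanLin, Matrix.mulVec, dotProduct, Fin.sum_univ_two, Matrix.vecHead, Matrix.vecTail,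
        Real.rpow_natCast]
      try ring_nf
  rw [hx]
  have hxn : ‖x‖ = Real.sqrt (‖x 0‖ ^ 2 + ‖x 1‖ ^ 2) := by
    rw [EuclideanSpace.norm_eq, Fin.sum_univ_two]
  have key : ‖(inner ℂ lami (ξ i i) : ℂ) * x 0 + (inner ℂ γ (ξ i j) : ℂ) * x 1‖ ^ 2
      + ‖(inner ℂ lamj (ξ j j) : ℂ) * x 1‖ ^ 2 ≤ (N * ‖x‖) ^ 2 := by
    have t1 : ‖(inner ℂ lami (ξ i i) : ℂ) * x 0 + (inner ℂ γ (ξ i j) : ℂ) * x 1‖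
        ≤ ‖lami‖ * ‖ξ i i‖ * ‖x 0‖ + ‖γ‖ * ‖ξ i j‖ * ‖x 1‖ := by
      calc ‖(inner ℂ lami (ξ i i) : ℂ) * x 0 + (inner ℂ γ (ξ i j) : ℂ) * x 1‖
          ≤ ‖(inner ℂ lami (ξ i i) : ℂ) * x 0‖ + ‖(inner ℂ γ (ξ i j) : ℂ) * x 1‖ :=
            norm_add_le _ _
        _ ≤ ‖lami‖ * ‖ξ i i‖ * ‖x 0‖ + ‖γ‖ * ‖ξ i j‖ * ‖x 1‖ := by
            rw [norm_mul, norm_mul]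
            gcongr <;> exact norm_inner_le_norm _ _
    have t3 : ‖(inner ℂ lamj (ξ j j) : ℂ) * x 1‖ ≤ ‖lamj‖ * ‖ξ j j‖ * ‖x 1‖ := by
      rw [norm_mul]
      exact mul_le_mul_of_nonneg_right (norm_inner_le_norm _ _) (norm_nonneg _)
    have hx2 : ‖x 0‖ ^ 2 + ‖x 1‖ ^ 2 = ‖x‖ ^ 2 := by
      rw [hxn, Real.sq_sqrt (by positivity)]
    have := stmt5_aux (norm_nonneg lami) (norm_nonneg γ) (norm_nonneg (ξ i i))
      (norm_nonneg (ξ i j)) (norm_nonneg (ξ j j)) (norm_nonneg (x 0)) (norm_nonneg (x 1))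
      (norm_nonneg ((inner ℂ lami (ξ i i) : ℂ) * x 0 + (inner ℂ γ (ξ i j) : ℂ) * x 1))
      (norm_nonneg (0:ℂ)) (norm_nonneg ((inner ℂ lamj (ξ j j) : ℂ) * x 1))
      h1 h2 (norm_nonneg lamj) hi hj t1 t3
    calc ‖(inner ℂ lami (ξ i i) : ℂ) * x 0 + (inner ℂ γ (ξ i j) : ℂ) * x 1‖ ^ 2
        + ‖(inner ℂ lamj (ξ j j) : ℂ) * x 1‖ ^ 2
        ≤ N ^ 2 * ‖x 0‖ ^ 2 + N ^ 2 * ‖x 1‖ ^ 2 := this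
      _ = (N * ‖x‖) ^ 2 := by rw [mul_pow, ← hx2]; ring
  calc Real.sqrt (‖(inner ℂ lami (ξ i i) : ℂ) * x 0 + (inner ℂ γ (ξ i j) : ℂ) * x 1‖ ^ 2
        + ‖(inner ℂ lamj (ξ j j) : ℂ) * x 1‖ ^ 2)
      ≤ Real.sqrt ((N * ‖x‖) ^ 2) := Real.sqrt_le_sqrt key
    _ = N * ‖x‖ := Real.sqrt_sq (by positivity)
end

section
/- Assume 0 ≤ q₁ < 1, 0 ≤ q₂ < 1 and t ≥ 0, and set q = max(q₁, q₂). Then for every k ≥ 1, max(a_k, b_k) ≤ q^k + k t q^{k-1}, and consequently max(a_k, b_k) → 0 as k → ∞. (This is the decay estimate proving that T̃_k T̃_k* → 0, so that the representation ρ_γ extends to a w*-continuous representation of H^∞(C).) -/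
/-- if `0 ≤ q₁ < 1`, `0 ≤ q₂ < 1`, `t ≥ 0` and `q = max(q₁, q₂)`, then for
every `k ≥ 1` one has `max(a_k, b_k) ≤ q^k + k t q^{k-1}`, and consequently
`max(a_k, b_k) → 0` as `k → ∞`. -/
theorem stmt_11 (q₁ q₂ t : ℝ) (hq₁ : 0 ≤ q₁) (hq₁' : q₁ < 1)
    (hq₂ : 0 ≤ q₂) (hq₂' : q₂ < 1) (ht : 0 ≤ t)
    (a b : ℕ → ℝ)
    (ha1 : a 1 = q₁ + t) (hb1 : b 1 = q₂)
    (harec : ∀ k, 1 ≤ k → a (k + 1) = q₁ * a k + t * b k)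
    (hbrec : ∀ k, 1 ≤ k → b (k + 1) = q₂ * b k) :
    (∀ k, 1 ≤ k →
        max (a k) (b k) ≤ max q₁ q₂ ^ k + (k : ℝ) * t * max q₁ q₂ ^ (k - 1)) ∧
      Filter.Tendsto (fun k => max (a k) (b k)) Filter.atTop (nhds 0) := by
  set q := max q₁ q₂ with hqdef
  have hq : 0 ≤ q := le_trans hq₁ (le_max_left _ _)
  have hq' : q < 1 := max_lt hq₁' hq₂'
  have hq1q : q₁ ≤ q := le_max_left _ _
  have hq2q : q₂ ≤ q := le_max_right _ _
  -- bounds on b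
  have hb : ∀ k, 1 ≤ k → 0 ≤ b k ∧ b k ≤ q ^ k := by
    intro k hk
    induction k, hk using Nat.le_induction with
    | base => simpa [hb1] using ⟨hq₂, by simpa using hq2q⟩
    | succ n hn ih =>
      rw [hbrec n hn]
      constructor
      · exact mul_nonneg hq₂ ih.1
      · calc q₂ * b n ≤ q * q ^ n := by
              exact mul_le_mul hq2q ih.2 ih.1 hq
          _ = q ^ (n + 1) := (pow_succ' q n).symm
  -- bounds on a
  have ha : ∀ k, 1 ≤ k → 0 ≤ a k ∧ a k ≤ q ^ k + (k : ℝ) * t * q ^ (k - 1) := by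
    intro k hk
    induction k, hk using Nat.le_induction with
    | base =>
      constructor
      · simpa [ha1] using add_nonneg hq₁ ht
      · simp only [ha1, Nat.sub_self, pow_zero, pow_one, Nat.cast_one, one_mul, mul_one]
        linarith
    | succ n hn ih =>
      rw [harec n hn]
      have hbn := hb n hn
      constructor
      · exact add_nonneg (mul_nonneg hq₁ ih.1) (mul_nonneg ht hbn.1)
      · have h1 : q₁ * a n ≤ q * (q ^ n + (n : ℝ) * t * q ^ (n - 1)) := by
          have hbd : 0 ≤ q ^ n + (n : ℝ) * t * q ^ (n - 1) := le_trans ih.1 ih.2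
          calc q₁ * a n ≤ q₁ * (q ^ n + (n : ℝ) * t * q ^ (n - 1)) :=
                mul_le_mul_of_nonneg_left ih.2 hq₁
            _ ≤ q * (q ^ n + (n : ℝ) * t * q ^ (n - 1)) :=
                mul_le_mul_of_nonneg_right hq1q hbd
        have h2 : t * b n ≤ t * q ^ n := mul_le_mul_of_nonneg_left hbn.2 ht
        have hpow : q * q ^ (n - 1) ≤ q ^ n := by
          obtain ⟨m, rfl⟩ := Nat.exists_eq_add_of_le hn
          rw [add_comm]
          exact le_of_eq (pow_succ' q m).symm
        have h3 : q * ((n : ℝ) * t * q ^ (n - 1)) ≤ (n : ℝ) * t * q ^ n := by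
          have : q * ((n : ℝ) * t * q ^ (n - 1)) = (n : ℝ) * t * (q * q ^ (n - 1)) := by ring
          rw [this]
          exact mul_le_mul_of_nonneg_left hpow (by positivity)
        have : q₁ * a n + t * b n ≤ q ^ (n + 1) + (n : ℝ) * t * q ^ n + t * q ^ n := by
          have := add_le_add h1 h2
          calc q₁ * a n + t * b n ≤ q * (q ^ n + (n : ℝ) * t * q ^ (n - 1)) + t * q ^ n := this
            _ = q * q ^ n + q * ((n : ℝ) * t * q ^ (n - 1)) + t * q ^ n := by ring
            _ ≤ q ^ (n + 1) + (n : ℝ) * t * q ^ n + t * q ^ n := by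
                rw [pow_succ]
                have := h3
                nlinarith [h3]
        calc q₁ * a n + t * b n ≤ q ^ (n + 1) + (n : ℝ) * t * q ^ n + t * q ^ n := this
          _ = q ^ (n + 1) + ((n : ℝ) + 1) * t * q ^ n := by ring
          _ = q ^ (n + 1) + ((n + 1 : ℕ) : ℝ) * t * q ^ (n + 1 - 1) := by
              push_cast; ring_nf
  have hbound : ∀ k, 1 ≤ k →
      max (a k) (b k) ≤ q ^ k + (k : ℝ) * t * q ^ (k - 1) := by
    intro k hk
    have hbk := hb k hk
    have hak := ha k hk
    refine max_le hak.2 (le_trans hbk.2 ?_)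
    have : 0 ≤ (k : ℝ) * t * q ^ (k - 1) := by positivity
    linarith
  refine ⟨hbound, ?_⟩
  have h1 : Filter.Tendsto (fun k : ℕ => q ^ k) Filter.atTop (nhds 0) :=
    tendsto_pow_atTop_nhds_zero_of_lt_one hq hq'
  have h2 : Filter.Tendsto (fun k : ℕ => (k : ℝ) * q ^ k) Filter.atTop (nhds 0) :=
    tendsto_self_mul_const_pow_of_lt_one hq hq'
  have hU : Filter.Tendsto (fun k : ℕ => q ^ (k + 1) + ((k + 1 : ℕ) : ℝ) * t * q ^ k)
      Filter.atTop (nhds 0) := by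
    have := (h1.const_mul q).add ((h2.const_mul t).add (h1.const_mul t))
    simp only [mul_zero, add_zero] at this
    refine this.congr fun k => ?_
    push_cast
    ring
  have hU' : Filter.Tendsto (fun k : ℕ => q ^ k + (k : ℝ) * t * q ^ (k - 1))
      Filter.atTop (nhds 0) := by
    rw [← Filter.tendsto_add_atTop_iff_nat 1]
    refine hU.congr fun k => ?_
    simp
  refine squeeze_zero' ?_ ?_ hU'
  · filter_upwards [Filter.eventually_ge_atTop 1] with k hk
    exact le_max_of_le_left (ha k hk).1
  · filter_upwards [Filter.eventually_ge_atTop 1] with k hk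
    exact hbound k hk
end

section
/- Assume ‖λ₁‖ < 1 and ‖λ₂‖ < 1. Define bounded operators P_k on ℂ² recursively by P₁ = S S* and P_{k+1} z = S(a_k·u_z, b_k·v_z, b_k·w_z), where (u_z, v_z, w_z) = S*(z) and a_k = ⟨e₁, P_k e₁⟩, b_k = ⟨e₂, P_k e₂⟩ are the diagonal entries of P_k (e₁, e₂ being the standard basis of ℂ²). Then each P_k is the diagonal operator diag(a_k, b_k) with a_k, b_k ≥ 0, and ‖P_k‖ → 0 as k → ∞. (This is the concrete form of the statement T̃_k T̃_k* → 0 in the strong operator topology for the covariant pair (T_γ, σ).) -/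
/-- The first standard basis vector of `ℂ²`. -/
noncomputable def e₁ : EuclideanSpace ℂ (Fin 2) := EuclideanSpace.single 0 1

/-- The second standard basis vector of `ℂ²`. -/
noncomputable def e₂ : EuclideanSpace ℂ (Fin 2) := EuclideanSpace.single 1 1

set_option maxHeartbeats 1000000 in
/-- assume `‖λ₁‖ < 1` and `‖λ₂‖ < 1`.  Define `P₁ = S S*` and
`P_{k+1} z = S(a_k·u_z, b_k·v_z, b_k·w_z)` where `(u_z, v_z, w_z) = S*(z)` and
`a_k = ⟨e₁, P_k e₁⟩`, `b_k = ⟨e₂, P_k e₂⟩`.  Then each `P_k` is the diagonal operator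
`diag(a_k, b_k)` with `a_k, b_k ≥ 0`, and `‖P_k‖ → 0` as `k → ∞`. -/
theorem stmt_12 {H₁ H₂ H₃ : Type*}
    [NormedAddCommGroup H₁] [InnerProductSpace ℂ H₁] [CompleteSpace H₁]
    [NormedAddCommGroup H₂] [InnerProductSpace ℂ H₂] [CompleteSpace H₂]
    [NormedAddCommGroup H₃] [InnerProductSpace ℂ H₃] [CompleteSpace H₃]
    (lam₁ : H₁) (γ : H₂) (lam₂ : H₃)
    (hlam₁ : ‖lam₁‖ < 1) (hlam₂ : ‖lam₂‖ < 1)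
    (S : WithLp 2 (H₁ × WithLp 2 (H₂ × H₃)) →L[ℂ] EuclideanSpace ℂ (Fin 2))
    (hS : ∀ (u : H₁) (v : H₂) (w : H₃),
      S ((WithLp.equiv 2 _).symm (u, (WithLp.equiv 2 _).symm (v, w))) =
        (WithLp.equiv 2 _).symm
          ![(inner ℂ lam₁ u : ℂ) + (inner ℂ γ v : ℂ), (inner ℂ lam₂ w : ℂ)])
    (P : ℕ → EuclideanSpace ℂ (Fin 2) →L[ℂ] EuclideanSpace ℂ (Fin 2))
    (hP1 : P 1 = S.comp (ContinuousLinearMap.adjoint S))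
    (hPrec : ∀ k, 1 ≤ k → ∀ z : EuclideanSpace ℂ (Fin 2),
      P (k + 1) z =
        S ((WithLp.equiv 2 _).symm
          ((inner ℂ e₁ (P k e₁) : ℂ) •
              (WithLp.equiv 2 _ (ContinuousLinearMap.adjoint S z)).1,
            (WithLp.equiv 2 _).symm
              ((inner ℂ e₂ (P k e₂) : ℂ) •
                  ((WithLp.equiv 2 _)
                    ((WithLp.equiv 2 _ (ContinuousLinearMap.adjoint S z)).2)).1,
                (inner ℂ e₂ (P k e₂) : ℂ) •
                  ((WithLp.equiv 2 _)
                    ((WithLp.equiv 2 _ (ContinuousLinearMap.adjoint S z)).2)).2)))) :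
    (∀ k, 1 ≤ k → ∃ aₖ bₖ : ℝ, 0 ≤ aₖ ∧ 0 ≤ bₖ ∧
        (inner ℂ e₁ (P k e₁) : ℂ) = (aₖ : ℂ) ∧ (inner ℂ e₂ (P k e₂) : ℂ) = (bₖ : ℂ) ∧
        ∀ z : EuclideanSpace ℂ (Fin 2),
          P k z = (WithLp.equiv 2 _).symm ![(aₖ : ℂ) * z 0, (bₖ : ℂ) * z 1]) ∧
      Filter.Tendsto (fun k => ‖P k‖) Filter.atTop (nhds 0) := by
  have hadj : ∀ z : EuclideanSpace ℂ (Fin 2),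
      ContinuousLinearMap.adjoint S z =
        (WithLp.equiv 2 _).symm (z 0 • lam₁,
          (WithLp.equiv 2 _).symm (z 0 • γ, z 1 • lam₂)) := by
    intro z
    apply ext_inner_left ℂ
    intro x
    rw [ContinuousLinearMap.adjoint_inner_right]
    have hx : x = (WithLp.equiv 2 _).symm ((WithLp.equiv 2 _ x).1, (WithLp.equiv 2 _).symm
        ((WithLp.equiv 2 _ (WithLp.equiv 2 _ x).2).1, (WithLp.equiv 2 _ (WithLp.equiv 2 _ x).2).2)) := rfl
    rw [hx, hS]
    simp only [WithLp.prod_inner_apply, WithLp.equiv_symm_apply, WithLp.ofLp_toLp,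
      PiLp.inner_apply, Fin.sum_univ_two, WithLp.equiv_symm_apply, PiLp.toLp_apply,
      Matrix.cons_val_zero, Matrix.cons_val_one, Matrix.head_cons,
      inner_smul_right, RCLike.inner_apply, map_add, inner_conj_symm]
    ring
  have hco : (RCLike.ofReal : ℝ → ℂ) = Complex.ofReal := rfl
  obtain ⟨r, hrdef⟩ : ∃ x : ℝ, x = ‖lam₁‖ ^ 2 := ⟨_, rfl⟩
  obtain ⟨c, hcdef⟩ : ∃ x : ℝ, x = ‖γ‖ ^ 2 := ⟨_, rfl⟩
  obtain ⟨s, hsdef⟩ : ∃ x : ℝ, x = ‖lam₂‖ ^ 2 := ⟨_, rfl⟩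
  have hr0 : 0 ≤ r := hrdef ▸ sq_nonneg _
  have hc0 : 0 ≤ c := hcdef ▸ sq_nonneg _
  have hs0 : 0 ≤ s := hsdef ▸ sq_nonneg _
  have hr1 : r < 1 := by rw [hrdef]; nlinarith [norm_nonneg lam₁]
  have hs1 : s < 1 := by rw [hsdef]; nlinarith [norm_nonneg lam₂]
  obtain ⟨aa, haa0, haaS⟩ : ∃ aa : ℕ → ℝ, aa 0 = r + c ∧
      ∀ n, aa (n + 1) = r * aa n + c * s ^ (n + 1) :=
    ⟨fun n => Nat.rec (r + c) (fun m am => r * am + c * s ^ (m + 1)) n, rfl, fun _ => rfl⟩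
  have haa_nonneg : ∀ n, 0 ≤ aa n := by
    intro n
    induction n with
    | zero => rw [haa0]; positivity
    | succ n ih => rw [haaS]; positivity
  -- the diagonal formula
  have diag : ∀ k : ℕ, ∀ z : EuclideanSpace ℂ (Fin 2),
      P (k + 1) z = (WithLp.equiv 2 _).symm
        ![(Complex.ofReal (aa k)) * z 0, (Complex.ofReal (s ^ (k + 1))) * z 1] := by
    intro k
    induction k with
    | zero =>
      intro z
      rw [hP1, ContinuousLinearMap.comp_apply, hadj z, hS]
      congr 1
      funext i
      fin_cases i
      all_goals
        simp only [Fin.zero_eta, Fin.mk_one, Matrix.cons_val_zero, Matrix.cons_val_one, Matrix.head_cons,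
          inner_smul_right, inner_self_eq_norm_sq_to_K, hco, haa0, pow_zero, pow_one,
          hrdef, hcdef, hsdef]
      all_goals push_cast
      all_goals ring_nf
      all_goals try norm_cast
      all_goals try (push_cast; ring)
    | succ k ih =>
      intro z
      have ha : (inner ℂ e₁ (P (k + 1) e₁) : ℂ) = Complex.ofReal (aa k) := by
        rw [ih e₁]
        simp [e₁, EuclideanSpace.inner_single_left, WithLp.equiv_symm_apply, PiLp.toLp_apply,
          EuclideanSpace.single_apply]
      have hb : (inner ℂ e₂ (P (k + 1) e₂) : ℂ) = Complex.ofReal (s ^ (k + 1)) := by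
        rw [ih e₂]
        simp [e₂, EuclideanSpace.inner_single_left, WithLp.equiv_symm_apply, PiLp.toLp_apply,
          EuclideanSpace.single_apply]
      rw [hPrec (k + 1) (Nat.le_add_left 1 k) z, ha, hb, hadj z]
      simp only [Equiv.apply_symm_apply, smul_smul]
      rw [hS]
      congr 1
      funext i
      fin_cases i
      all_goals
        simp only [Fin.zero_eta, Fin.mk_one, Matrix.cons_val_zero, Matrix.cons_val_one, Matrix.head_cons,
          inner_smul_right, inner_self_eq_norm_sq_to_K, hco, haaS k,
          hrdef, hcdef, hsdef]
      all_goals push_cast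
      all_goals ring_nf
      all_goals try norm_cast
      all_goals try (push_cast; ring)
  -- inner products of the diagonal operators
  have hinnera : ∀ k : ℕ, (inner ℂ e₁ (P (k + 1) e₁) : ℂ) = Complex.ofReal (aa k) := by
    intro k
    rw [diag k e₁]
    simp [e₁, EuclideanSpace.inner_single_left, WithLp.equiv_symm_apply, PiLp.toLp_apply,
      EuclideanSpace.single_apply]
  have hinnerb : ∀ k : ℕ, (inner ℂ e₂ (P (k + 1) e₂) : ℂ) = Complex.ofReal (s ^ (k + 1)) := by
    intro k
    rw [diag k e₂]
    simp [e₂, EuclideanSpace.inner_single_left, WithLp.equiv_symm_apply, PiLp.toLp_apply,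
      EuclideanSpace.single_apply]
  constructor
  · intro k hk
    obtain ⟨m, rfl⟩ : ∃ m, k = m + 1 := ⟨k - 1, (Nat.succ_pred_eq_of_pos hk).symm⟩
    exact ⟨aa m, s ^ (m + 1), haa_nonneg m, pow_nonneg hs0 _, hinnera m, hinnerb m, diag m⟩
  · -- norm bound
    have hnorm : ∀ k : ℕ, ‖P (k + 1)‖ ≤ aa k + s ^ (k + 1) := by
      intro k
      have hb0 : (0:ℝ) ≤ s ^ (k + 1) := pow_nonneg hs0 _
      refine ContinuousLinearMap.opNorm_le_bound _
        (add_nonneg (haa_nonneg k) hb0) fun z => ?_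
      rw [diag k z]
      have hz : ‖z‖ ^ 2 = ‖z 0‖ ^ 2 + ‖z 1‖ ^ 2 := by
        rw [EuclideanSpace.norm_eq, Real.sq_sqrt (by positivity)]
        simp [Fin.sum_univ_two]
      have hlhs : ‖(WithLp.equiv 2 (Fin 2 → ℂ)).symm
          ![(Complex.ofReal (aa k)) * z 0, (Complex.ofReal (s ^ (k + 1))) * z 1]‖ ^ 2
          = (aa k) ^ 2 * ‖z 0‖ ^ 2 + (s ^ (k + 1)) ^ 2 * ‖z 1‖ ^ 2 := by
        rw [EuclideanSpace.norm_eq, Real.sq_sqrt (by positivity)]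
        simp only [Fin.sum_univ_two, WithLp.equiv_symm_apply, PiLp.toLp_apply, Matrix.cons_val_zero,
          Matrix.cons_val_one, Matrix.head_cons, norm_mul, Complex.norm_real,
          Real.norm_eq_abs, abs_of_nonneg (haa_nonneg k), abs_of_nonneg hb0]
        ring
      have h1 : ‖(WithLp.equiv 2 (Fin 2 → ℂ)).symm
          ![(Complex.ofReal (aa k)) * z 0, (Complex.ofReal (s ^ (k + 1))) * z 1]‖ ^ 2
          ≤ ((aa k + s ^ (k + 1)) * ‖z‖) ^ 2 := by
        rw [hlhs, mul_pow, hz]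
        have h00 : (0:ℝ) ≤ ‖z 0‖ ^ 2 := sq_nonneg _
        have h11 : (0:ℝ) ≤ ‖z 1‖ ^ 2 := sq_nonneg _
        nlinarith [mul_nonneg (mul_nonneg (haa_nonneg k) hb0) h00,
          mul_nonneg (mul_nonneg (haa_nonneg k) hb0) h11,
          mul_nonneg (mul_nonneg hb0 hb0) h00,
          mul_nonneg (mul_nonneg (haa_nonneg k) (haa_nonneg k)) h11]
      calc ‖(WithLp.equiv 2 (Fin 2 → ℂ)).symm
            ![(Complex.ofReal (aa k)) * z 0, (Complex.ofReal (s ^ (k + 1))) * z 1]‖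
          = Real.sqrt (‖(WithLp.equiv 2 (Fin 2 → ℂ)).symm
            ![(Complex.ofReal (aa k)) * z 0, (Complex.ofReal (s ^ (k + 1))) * z 1]‖ ^ 2) :=
            (Real.sqrt_sq (norm_nonneg _)).symm
        _ ≤ Real.sqrt (((aa k + s ^ (k + 1)) * ‖z‖) ^ 2) := Real.sqrt_le_sqrt h1
        _ = (aa k + s ^ (k + 1)) * ‖z‖ :=
            Real.sqrt_sq (mul_nonneg (add_nonneg (haa_nonneg k) hb0) (norm_nonneg _))
    -- convergence
    obtain ⟨t, htdef⟩ : ∃ x : ℝ, x = (max r s + 1) / 2 := ⟨_, rfl⟩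
    have hmax1 : max r s < 1 := max_lt hr1 hs1
    have hmax0 : 0 ≤ max r s := le_max_of_le_left hr0
    have ht1 : t < 1 := by rw [htdef]; linarith
    have htr : r < t := by rw [htdef]; have := le_max_left r s; linarith
    have hts : s < t := by rw [htdef]; have := le_max_right r s; linarith
    have ht0 : 0 < t := by rw [htdef]; linarith
    obtain ⟨C, hCdef⟩ : ∃ x : ℝ, x = max (r + c) (c / (t - r)) := ⟨_, rfl⟩
    have hC1 : r + c ≤ C := hCdef ▸ le_max_left _ _
    have hC2 : c / (t - r) ≤ C := hCdef ▸ le_max_right _ _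
    have hC0 : 0 ≤ C := le_trans (by positivity) hC1
    have hbound : ∀ n, aa n ≤ C * t ^ n := by
      intro n
      induction n with
      | zero => simpa [haa0] using hC1
      | succ n ih =>
        rw [haaS]
        have hsn : s ^ (n + 1) ≤ t ^ (n + 1) := pow_le_pow_left₀ hs0 hts.le _
        have htn : (0:ℝ) ≤ t ^ n := pow_nonneg ht0.le n
        have hct : c * t ^ (n + 1) ≤ C * (t - r) * t ^ n := by
          have h1 : c ≤ C * (t - r) := (div_le_iff₀ (by linarith)).mp hC2
          calc c * t ^ (n + 1) = c * t * t ^ n := by ring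
            _ ≤ C * (t - r) * t ^ n := by
                refine mul_le_mul_of_nonneg_right ?_ htn
                nlinarith
        calc r * aa n + c * s ^ (n + 1)
            ≤ r * (C * t ^ n) + c * t ^ (n + 1) := by gcongr
          _ ≤ r * (C * t ^ n) + C * (t - r) * t ^ n := by linarith
          _ = C * t ^ (n + 1) := by ring
    have htt0 : Filter.Tendsto (fun n : ℕ => C * t ^ n) Filter.atTop (nhds 0) := by
      have := tendsto_pow_atTop_nhds_zero_of_lt_one ht0.le ht1
      simpa using this.const_mul C
    have haalim : Filter.Tendsto aa Filter.atTop (nhds 0) :=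
      squeeze_zero haa_nonneg hbound htt0
    have hslim : Filter.Tendsto (fun n : ℕ => s ^ (n + 1)) Filter.atTop (nhds 0) :=
      (tendsto_pow_atTop_nhds_zero_of_lt_one hs0 hs1).comp (Filter.tendsto_add_atTop_nat 1)
    have hsum : Filter.Tendsto (fun n : ℕ => aa n + s ^ (n + 1)) Filter.atTop (nhds 0) := by
      simpa using haalim.add hslim
    rw [← Filter.tendsto_add_atTop_iff_nat (f := fun k => ‖P k‖) 1]
    exact squeeze_zero (fun n => norm_nonneg _) hnorm hsum
end
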